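/- For all real t, the quadruple (w₁, t, w₂, z) with w₁ = ((√2 − √6)t + √(2 + 6t² + 3t⁴))/(1 + √3 + 3t²), w₂ = ((√6 − √2)t + √(2 + 6t² + 3t⁴))/(1 + √3 + 3t²), z = √(2 + 6t² + 3t⁴)/(1 + √3 + √3 t²) satisfies the equation (1 + √3 + 3t²)w₁² + 2√2(√3 − 1)t·w₁ − t² − √3 + 1 = 0. -/
import Mathlib


open Real

theorem example1_bricard_first_equation (t : ℝ)
    (w₁ w₂ z : ℝ)
    (hw₁ : w₁ = ((Real.sqrt 2 - Real.sqrt 6) * t +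
        Real.sqrt (2 + 6 * t ^ 2 + 3 * t ^ 4)) / (1 + Real.sqrt 3 + 3 * t ^ 2))
    (hw₂ : w₂ = ((Real.sqrt 6 - Real.sqrt 2) * t +
        Real.sqrt (2 + 6 * t ^ 2 + 3 * t ^ 4)) / (1 + Real.sqrt 3 + 3 * t ^ 2))
    (hz : z = Real.sqrt (2 + 6 * t ^ 2 + 3 * t ^ 4) /
        (1 + Real.sqrt 3 + Real.sqrt 3 * t ^ 2)) :
    (1 + Real.sqrt 3 + 3 * t ^ 2) * w₁ ^ 2 +
      2 * Real.sqrt 2 * (Real.sqrt 3 - 1) * t * w₁ - t ^ 2 - Real.sqrt 3 + 1 = 0 := by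
  set R := Real.sqrt (2 + 6 * t ^ 2 + 3 * t ^ 4) with hRdef
  have h2 : Real.sqrt 2 ^ 2 = 2 := Real.sq_sqrt (by norm_num)
  have h3 : Real.sqrt 3 ^ 2 = 3 := Real.sq_sqrt (by norm_num)
  have h6 : Real.sqrt 6 = Real.sqrt 2 * Real.sqrt 3 := by
    rw [← Real.sqrt_mul (by norm_num)]; norm_num
  have hR : R ^ 2 = 2 + 6 * t ^ 2 + 3 * t ^ 4 := Real.sq_sqrt (by positivity)
  have h3pos : (0:ℝ) < Real.sqrt 3 := Real.sqrt_pos.mpr (by norm_num)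
  have hD : (1 + Real.sqrt 3 + 3 * t ^ 2) ≠ 0 := by positivity
  have hDw : w₁ * (1 + Real.sqrt 3 + 3 * t ^ 2)
      = Real.sqrt 2 * (1 - Real.sqrt 3) * t + R := by
    rw [hw₁, h6, div_mul_cancel₀ _ hD]; ring
  have key : R ^ 2 - (Real.sqrt 2 * (1 - Real.sqrt 3) * t) ^ 2 +
      (1 - Real.sqrt 3 - t ^ 2) * (1 + Real.sqrt 3 + 3 * t ^ 2) = 0 := by
    linear_combination hR - ((1 - Real.sqrt 3) ^ 2 * t ^ 2) * h2 -
      (2 * t ^ 2 + 1) * h3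
  have hfin : (1 + Real.sqrt 3 + 3 * t ^ 2) *
      ((1 + Real.sqrt 3 + 3 * t ^ 2) * w₁ ^ 2 +
        2 * Real.sqrt 2 * (Real.sqrt 3 - 1) * t * w₁ - t ^ 2 - Real.sqrt 3 + 1) = 0 := by
    linear_combination key +
      (w₁ * (1 + Real.sqrt 3 + 3 * t ^ 2) + R - Real.sqrt 2 * (1 - Real.sqrt 3) * t) * hDw
  exact (mul_eq_zero.mp hfin).resolve_left hD
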